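/- There exists an absolute constant C > 0 such that for every integer p ≥ 1, every δ ∈ (0,1], and all real polynomials π₁, π₂ in two variables of degree at most p in each variable, one has ∫₀¹ ∫₀^{δ} |π₁(x,y) π₂(x,y)| dx dy ≤ C p √δ ‖π₁‖_{L²([0,1]²)} ‖π₂‖_{L²([0,δ]×[0,1])}. -/

import Mathlib

open MeasureTheory Set

/-- `g` is a polynomial in two variables of degree at most `p` in each variable. -/
def Poly2 (p : ℕ) (g : ℝ → ℝ → ℝ) : Prop :=
  ∃ c : Fin (p + 1) → Fin (p + 1) → ℝ,
    ∀ x y : ℝ, g x y = ∑ i : Fin (p + 1), ∑ j : Fin (p + 1), c i j * x ^ (i : ℕ) * y ^ (j : ℕ)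

/-- The `L²` norm of `g` over a set `s ⊆ ℝ²`. -/
noncomputable def L2two (g : ℝ → ℝ → ℝ) (s : Set (ℝ × ℝ)) : ℝ :=
  Real.sqrt (∫ z in s, (g z.1 z.2) ^ 2)

open Finset Complex intervalIntegral Real

section Aux

lemma cospow (j : ℕ) (θ : ℝ) :
    ((Real.cos θ : ℂ))^j
      = ∑ m ∈ range (j+1), ((j.choose m : ℂ) / 2^j) * Complex.exp ((2*(m:ℤ) - j) * I * θ) := by
  have hcos : ((Real.cos θ : ℂ)) = (Complex.exp (θ * I) + Complex.exp (-θ * I)) / 2 := by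
    rw [Complex.ofReal_cos, Complex.cos]
  rw [hcos, div_pow, add_pow, Finset.sum_div]
  refine Finset.sum_congr rfl fun m hm => ?_
  have hm' : m ≤ j := by simpa [Nat.lt_succ_iff] using hm
  rw [← Complex.exp_nat_mul, ← Complex.exp_nat_mul, ← Complex.exp_add]
  have : (m : ℂ) * (θ * I) + (j - m : ℕ) * (-θ * I) = (2*(m:ℤ) - j) * I * θ := by
    push_cast [Nat.cast_sub hm']
    ring
  rw [this]
  ring

lemma rep (p : ℕ) (a : ℕ → ℝ) :
    ∃ c : ℤ → ℂ, ∀ θ : ℝ,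
      ((∑ j ∈ range (p+1), a j * Real.cos θ ^ j : ℝ) : ℂ)
        = ∑ k ∈ Finset.Icc (-(p:ℤ)) (p:ℤ), c k * Complex.exp (k * I * θ) := by
  refine ⟨fun k => ∑ j ∈ range (p+1), ∑ m ∈ range (j+1),
      if 2*(m:ℤ) - j = k then (a j : ℂ) * ((j.choose m : ℂ) / 2^j) else 0, fun θ => ?_⟩
  have hR : ∀ k ∈ Finset.Icc (-(p:ℤ)) (p:ℤ),
      (∑ j ∈ range (p+1), ∑ m ∈ range (j+1),
        if 2*(m:ℤ) - j = k then (a j : ℂ) * ((j.choose m : ℂ) / 2^j) else 0)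
          * Complex.exp (k * I * θ)
      = ∑ j ∈ range (p+1), ∑ m ∈ range (j+1),
        if 2*(m:ℤ) - j = k then (a j : ℂ) * ((j.choose m : ℂ) / 2^j)
            * Complex.exp ((2*(m:ℤ) - j) * I * θ) else 0 := by
    intro k _
    rw [Finset.sum_mul]
    refine Finset.sum_congr rfl fun j _ => ?_
    rw [Finset.sum_mul]
    refine Finset.sum_congr rfl fun m _ => ?_
    rw [ite_mul, zero_mul]
    by_cases h : 2*(m:ℤ) - j = k
    · rw [if_pos h, if_pos h, ← h]; push_cast; ring_nf
    · rw [if_neg h, if_neg h]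
  rw [Finset.sum_congr rfl hR, Finset.sum_comm]
  rw [Complex.ofReal_sum]
  refine Finset.sum_congr rfl fun j hj => ?_
  rw [Finset.sum_comm, Complex.ofReal_mul, Complex.ofReal_pow, cospow, Finset.mul_sum]
  refine Finset.sum_congr rfl fun m hm => ?_
  have hj' : j ≤ p := by simpa [Nat.lt_succ_iff] using hj
  have hm' : m ≤ j := by simpa [Nat.lt_succ_iff] using hm
  have hmem : 2*(m:ℤ) - j ∈ Finset.Icc (-(p:ℤ)) (p:ℤ) := by
    rw [Finset.mem_Icc]
    omega
  rw [Finset.sum_ite_eq (Finset.Icc (-(p:ℤ)) (p:ℤ)) (2*(m:ℤ) - j), if_pos hmem]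
  ring

lemma expInt (n : ℤ) (hn : n ≠ 0) : ∫ θ in (0:ℝ)..(2*Real.pi), Complex.exp (n * I * θ) = 0 := by
  have h : (n * I : ℂ) ≠ 0 := by simp [Complex.I_ne_zero, hn]
  rw [integral_exp_mul_complex h]
  have : (n*I*((2*Real.pi:ℝ):ℂ):ℂ) = n * (2*Real.pi*I) := by push_cast; ring
  rw [this, Complex.exp_int_mul_two_pi_mul_I]
  simp

lemma contExp (k : ℤ) : Continuous fun θ : ℝ => Complex.exp ((k:ℂ) * I * θ) := by fun_prop

lemma parseval (p : ℕ) (c : ℤ → ℂ) (t : ℝ → ℝ)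
    (ht : ∀ θ : ℝ, ((t θ : ℝ) : ℂ) = ∑ k ∈ Finset.Icc (-(p:ℤ)) (p:ℤ), c k * Complex.exp (k * I * θ)) :
    ∫ θ in (0:ℝ)..(2*Real.pi), (t θ)^2
      = (∑ k ∈ Finset.Icc (-(p:ℤ)) (p:ℤ), norm (c k)^2) * (2*Real.pi) := by
  set K := Finset.Icc (-(p:ℤ)) (p:ℤ)
  have h1 : ∀ θ : ℝ, ((t θ^2 : ℝ) : ℂ)
      = ∑ k ∈ K, ∑ l ∈ K, (c k * (starRingEnd ℂ) (c l)) * Complex.exp ((↑(k - l)) * I * θ) := by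
    intro θ
    have e1 : ((t θ^2 : ℝ) : ℂ) = (↑(t θ)) * (starRingEnd ℂ) (↑(t θ)) := by
      rw [Complex.conj_ofReal]; push_cast; ring
    rw [e1, ht, map_sum, Finset.sum_mul_sum]
    refine Finset.sum_congr rfl fun k _ => Finset.sum_congr rfl fun l _ => ?_
    rw [map_mul]
    have e2 : (starRingEnd ℂ) (Complex.exp ((l:ℂ) * I * θ)) = Complex.exp (-((l:ℂ) * I * θ)) := by
      rw [← Complex.exp_conj]
      congr 1
      simp [Complex.conj_I]
    rw [e2, mul_mul_mul_comm, ← Complex.exp_add]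
    congr 2
    push_cast
    ring
  have h2 : (↑(∫ θ in (0:ℝ)..(2*Real.pi), (t θ)^2) : ℂ)
      = ∑ k ∈ K, ∑ l ∈ K, (c k * (starRingEnd ℂ) (c l)) * (if k = l then (2*Real.pi:ℂ) else 0) := by
    rw [← intervalIntegral.integral_ofReal]
    rw [intervalIntegral.integral_congr (g := fun θ => ∑ k ∈ K, ∑ l ∈ K,
        (c k * (starRingEnd ℂ) (c l)) * Complex.exp ((↑(k - l)) * I * θ)) (fun θ _ => h1 θ)]
    have hint1 : ∀ l : ℤ, ∀ d : ℂ, IntervalIntegrable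
        (fun θ : ℝ => d * Complex.exp ((l:ℂ) * I * θ)) volume 0 (2*Real.pi) :=
      fun l d => (continuous_const.mul (contExp l)).intervalIntegrable _ _
    rw [intervalIntegral.integral_finset_sum (fun k _ => (continuous_finset_sum _ fun l _ =>
        (continuous_const.mul (contExp (k - l))) : Continuous fun θ : ℝ => ∑ l ∈ K, c k * (starRingEnd ℂ) (c l) * Complex.exp (((k - l : ℤ) : ℂ) * I * θ)).intervalIntegrable _ _)]
    refine Finset.sum_congr rfl fun k _ => ?_
    rw [intervalIntegral.integral_finset_sum (fun l _ => hint1 (k - l) _)]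
    refine Finset.sum_congr rfl fun l _ => ?_
    rw [intervalIntegral.integral_const_mul]
    congr 1
    by_cases h : k = l
    · simp [h, intervalIntegral.integral_const]
    · rw [expInt _ (sub_ne_zero.mpr h), if_neg h]
  have h3 : ∀ k ∈ K, ∑ l ∈ K, (c k * (starRingEnd ℂ) (c l)) * (if k = l then (2*Real.pi:ℂ) else 0)
      = ((norm (c k)^2 * (2*Real.pi) : ℝ) : ℂ) := by
    intro k hk
    have : ∀ l ∈ K, (c k * (starRingEnd ℂ) (c l)) * (if k = l then (2*Real.pi:ℂ) else 0)
        = if k = l then (c k * (starRingEnd ℂ) (c l)) * (2*Real.pi:ℂ) else 0 := by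
      intro l _
      by_cases h : k = l <;> simp [h]
    rw [Finset.sum_congr rfl this, Finset.sum_ite_eq K k, if_pos hk, Complex.mul_conj,
      Complex.normSq_eq_norm_sq]
    push_cast
    ring
  rw [Finset.sum_congr rfl h3, ← Complex.ofReal_sum] at h2
  have := Complex.ofReal_inj.mp h2
  rw [this, Finset.sum_mul]

lemma pointwise_bd (p : ℕ) (c : ℤ → ℂ) (t : ℝ → ℝ)
    (ht : ∀ θ : ℝ, ((t θ : ℝ) : ℂ) = ∑ k ∈ Finset.Icc (-(p:ℤ)) (p:ℤ), c k * Complex.exp (k * I * θ))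
    (θ : ℝ) :
    (t θ)^2 ≤ (2*p+1) * ∑ k ∈ Finset.Icc (-(p:ℤ)) (p:ℤ), norm (c k)^2 := by
  set K := Finset.Icc (-(p:ℤ)) (p:ℤ)
  have hcard : (K.card : ℝ) = 2*p+1 := by
    have : K.card = 2*p+1 := by
      rw [Int.card_Icc]
      omega
    rw [this]; push_cast; ring
  have h1 : |t θ| ≤ ∑ k ∈ K, norm (c k) := by
    calc |t θ| = norm ((t θ : ℝ) : ℂ) := by rw [Complex.norm_real, Real.norm_eq_abs]
    _ = norm (∑ k ∈ K, c k * Complex.exp (k * I * θ)) := by rw [ht]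
    _ ≤ ∑ k ∈ K, norm (c k * Complex.exp (k * I * θ)) := by
        exact norm_sum_le _ _
    _ = ∑ k ∈ K, norm (c k) := by
        refine Finset.sum_congr rfl fun k _ => ?_
        rw [norm_mul, Complex.norm_exp]
        simp
  have h2 : (t θ)^2 ≤ (∑ k ∈ K, norm (c k))^2 := by
    rw [← _root_.sq_abs (t θ)]
    exact pow_le_pow_left₀ (abs_nonneg _) h1 2
  refine h2.trans ?_
  have := sq_sum_le_card_mul_sum_sq (s := K) (f := fun k => norm (c k))
  rw [hcard] at this
  exact this

lemma symcos (f : ℝ → ℝ) (hf : Continuous f) :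
    ∫ θ in (0:ℝ)..(2*π), f (Real.cos θ) = 2 * ∫ θ in (0:ℝ)..π, f (Real.cos θ) := by
  have hi : ∀ u v : ℝ, IntervalIntegrable (fun θ => f (Real.cos θ)) volume u v :=
    fun u v => (hf.comp Real.continuous_cos).intervalIntegrable u v
  have hadd := intervalIntegral.integral_add_adjacent_intervals (hi 0 π) (hi π (2*π))
  have h2 : ∫ θ in π..(2*π), f (Real.cos θ) = ∫ θ in (0:ℝ)..π, f (Real.cos θ) := by
    have := intervalIntegral.integral_comp_sub_left (fun θ => f (Real.cos θ)) (2*π)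
      (a := 0) (b := π)
    simp only [Real.cos_two_pi_sub, sub_zero] at this
    rw [show 2*π - π = π by ring] at this
    exact this.symm
  rw [← hadd, h2]
  ring

lemma substcos (g : ℝ → ℝ) (hg : Continuous g) :
    ∫ θ in (0:ℝ)..π, g (Real.cos θ) * Real.sin θ = ∫ x in (-1:ℝ)..1, g x := by
  have h := intervalIntegral.integral_comp_smul_deriv (f := Real.cos)
    (f' := fun θ => -Real.sin θ) (g := g) (a := 0) (b := π)
    (fun x _ => (Real.hasDerivAt_cos x)) (Real.continuous_sin.neg.continuousOn) hg
  rw [Real.cos_zero, Real.cos_pi] at h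
  simp only [Function.comp_apply, smul_eq_mul] at h
  have h2 : ∫ θ in (0:ℝ)..π, -Real.sin θ * g (Real.cos θ)
      = - ∫ θ in (0:ℝ)..π, g (Real.cos θ) * Real.sin θ := by
    rw [← intervalIntegral.integral_neg]
    congr 1 with θ
    ring
  rw [h2] at h
  rw [show ∫ x in (1:ℝ)..(-1), g x = - ∫ x in (-1:ℝ)..1, g x from intervalIntegral.integral_symm _ _] at h
  linarith [h]

lemma rescale_int (g : ℝ → ℝ) (hg : Continuous g) :
    ∫ x in (-1:ℝ)..1, g ((x+1)/2) = 2 * ∫ u in (0:ℝ)..1, g u := by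
  have h := intervalIntegral.integral_comp_smul_deriv (f := fun x => (x+1)/2)
    (f' := fun _ => (1:ℝ)/2) (g := g) (a := -1) (b := 1)
    (fun x _ => ((hasDerivAt_id x).add_const 1).div_const 2) (continuousOn_const) hg
  norm_num at h
  linarith [h]

lemma contq (p : ℕ) (a : ℕ → ℝ) : Continuous (fun x : ℝ => ∑ j ∈ range (p+1), a j * x ^ j) :=
  continuous_finset_sum _ fun j _ => by fun_prop

set_option maxHeartbeats 1000000 in
lemma pt_half (p : ℕ) (hp : 1 ≤ p) (a : ℕ → ℝ) (x₀ : ℝ) (hx₀ : x₀ ∈ Icc (-1:ℝ) 1) :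
    (∑ j ∈ range (p+1), a j * x₀ ^ j)^2
      ≤ 12 * p^2 * ∫ x in (-1:ℝ)..1, (∑ j ∈ range (p+1), a j * x ^ j)^2 := by
  set q : ℝ → ℝ := fun x => ∑ j ∈ range (p+1), a j * x ^ j with hqdef
  obtain ⟨c, hc⟩ := rep p a
  set t : ℝ → ℝ := fun θ => q (Real.cos θ) with htdef
  have ht : ∀ θ : ℝ, ((t θ : ℝ) : ℂ) = ∑ k ∈ Finset.Icc (-(p:ℤ)) (p:ℤ),
      c k * Complex.exp (k * Complex.I * θ) := fun θ => hc θ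
  have hq : Continuous q := contq p a
  have hqc : Continuous fun x : ℝ => q x ^ 2 := by fun_prop
  have htc : Continuous fun θ : ℝ => t θ ^ 2 := by
    have : Continuous t := hq.comp Real.continuous_cos
    fun_prop
  have hts : Continuous fun θ : ℝ => t θ ^ 2 * Real.sin θ := by
    have : Continuous t := hq.comp Real.continuous_cos
    fun_prop
  set A : ℝ := ∫ θ in (0:ℝ)..(2*π), t θ ^ 2 with hAdef
  set B : ℝ := ∫ x in (-1:ℝ)..1, q x ^ 2 with hBdef
  set M : ℝ := (2*p+1) * ∑ k ∈ Finset.Icc (-(p:ℤ)) (p:ℤ), norm (c k)^2 with hMdef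
  have hB : 0 ≤ B := intervalIntegral.integral_nonneg (by norm_num) (fun x _ => sq_nonneg _)
  have hA : 0 ≤ A := intervalIntegral.integral_nonneg (by positivity) (fun x _ => sq_nonneg _)
  have hM0 : 0 ≤ M := by
    apply mul_nonneg (by positivity)
    exact Finset.sum_nonneg fun k _ => sq_nonneg _
  have hMA : M * (2*π) = (2*p+1) * A := by
    rw [hMdef, hAdef, parseval p c t ht]
    ring
  have hpw : ∀ θ : ℝ, t θ ^ 2 ≤ M := fun θ => pointwise_bd p c t ht θ
  -- symmetry
  have hsym : A = 2 * ∫ θ in (0:ℝ)..π, t θ ^ 2 := symcos (fun x => q x ^ 2) hqc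
  -- substitution
  have hsubst : ∫ θ in (0:ℝ)..π, t θ ^ 2 * Real.sin θ = B := substcos (fun x => q x ^ 2) hqc
  -- splitting
  set η : ℝ := π / (12*p) with hηdef
  have hπ := Real.pi_gt_three
  have hp' : (1:ℝ) ≤ p := by exact_mod_cast hp
  have hη0 : 0 < η := by positivity
  have hη2 : η ≤ π/2 := by
    rw [hηdef, div_le_div_iff₀ (by positivity) (by norm_num)]
    nlinarith
  have hηπ : η ≤ π - η := by linarith
  have hiT : ∀ u v : ℝ, IntervalIntegrable (fun θ => t θ ^ 2) volume u v :=
    fun u v => htc.intervalIntegrable u v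
  have hiTS : ∀ u v : ℝ, IntervalIntegrable (fun θ => t θ ^ 2 * Real.sin θ) volume u v :=
    fun u v => hts.intervalIntegrable u v
  have hsplit : (∫ θ in (0:ℝ)..π, t θ ^ 2)
      = (∫ θ in (0:ℝ)..η, t θ ^ 2) + (∫ θ in η..(π-η), t θ ^ 2) + (∫ θ in (π-η)..π, t θ ^ 2) := by
    rw [intervalIntegral.integral_add_adjacent_intervals (hiT 0 η) (hiT η (π-η)),
      intervalIntegral.integral_add_adjacent_intervals (hiT 0 (π-η)) (hiT (π-η) π)]
  have bound1 : (∫ θ in (0:ℝ)..η, t θ ^ 2) ≤ η * M := by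
    calc (∫ θ in (0:ℝ)..η, t θ ^ 2) ≤ ∫ _ in (0:ℝ)..η, M := by
          apply intervalIntegral.integral_mono_on hη0.le (hiT 0 η)
            (intervalIntegrable_const) (fun x _ => hpw x)
    _ = η * M := by rw [intervalIntegral.integral_const]; simp
  have bound3 : (∫ θ in (π-η)..π, t θ ^ 2) ≤ η * M := by
    calc (∫ θ in (π-η)..π, t θ ^ 2) ≤ ∫ _ in (π-η)..π, M := by
          apply intervalIntegral.integral_mono_on (by linarith) (hiT _ _)
            (intervalIntegrable_const) (fun x _ => hpw x)
    _ = η * M := by rw [intervalIntegral.integral_const, smul_eq_mul]; ring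
  have bound2 : (∫ θ in η..(π-η), t θ ^ 2) ≤ 6*p * ∫ θ in (0:ℝ)..π, t θ ^ 2 * Real.sin θ := by
    have step1 : (∫ θ in η..(π-η), t θ ^ 2)
        ≤ ∫ θ in η..(π-η), 6*p * (t θ ^ 2 * Real.sin θ) := by
      apply intervalIntegral.integral_mono_on hηπ (hiT _ _)
        (((hiTS _ _).const_mul _)) ?_
      intro θ hθ
      have hθ1 : η ≤ θ := hθ.1
      have hθ2 : θ ≤ π - η := hθ.2
      have hsin : 1/(6*p) ≤ Real.sin θ := by
        rcases le_or_gt θ (π/2) with hc | hc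
        · have := Real.mul_le_sin (x := θ) (by linarith) hc
          have h2 : 1/(6*(p:ℝ)) ≤ 2/π * θ := by
            rw [hηdef] at hθ1
            rw [div_le_iff₀ (by positivity)]
            rw [div_le_iff₀ (by positivity)] at hθ1
            have e2 : (2/π*θ)*(6*(p:ℝ))*π = 12*p*θ := by field_simp; ring
            nlinarith [e2, Real.pi_pos]
          linarith
        · have h0 : π - θ ≤ π/2 := by linarith
          have := Real.mul_le_sin (x := π - θ) (by linarith) h0
          rw [Real.sin_pi_sub] at this
          have h2 : 1/(6*(p:ℝ)) ≤ 2/π * (π - θ) := by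
            have hθ1' : η ≤ π - θ := by linarith
            rw [hηdef] at hθ1'
            rw [div_le_iff₀ (by positivity)]
            rw [div_le_iff₀ (by positivity)] at hθ1'
            have e2 : (2/π*(π - θ))*(6*(p:ℝ))*π = 12*p*(π - θ) := by field_simp; ring
            nlinarith [e2, Real.pi_pos]
          linarith
      have hp0 : (0:ℝ) < 6*p := by positivity
      have := mul_le_mul_of_nonneg_left hsin (mul_nonneg hp0.le (sq_nonneg (t θ)))
      calc t θ ^ 2 = (6*p * t θ ^ 2) * (1/(6*p)) := by field_simp
      _ ≤ (6*p * t θ ^ 2) * Real.sin θ := by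
          apply mul_le_mul_of_nonneg_left hsin (by positivity)
      _ = 6*p * (t θ ^ 2 * Real.sin θ) := by ring
    have step2 : (∫ θ in η..(π-η), t θ ^ 2 * Real.sin θ)
        ≤ ∫ θ in (0:ℝ)..π, t θ ^ 2 * Real.sin θ := by
      have e : (∫ θ in (0:ℝ)..π, t θ ^ 2 * Real.sin θ)
          = (∫ θ in (0:ℝ)..η, t θ ^ 2 * Real.sin θ) + (∫ θ in η..(π-η), t θ ^ 2 * Real.sin θ)
            + (∫ θ in (π-η)..π, t θ ^ 2 * Real.sin θ) := by
        rw [intervalIntegral.integral_add_adjacent_intervals (hiTS 0 η) (hiTS η (π-η)),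
          intervalIntegral.integral_add_adjacent_intervals (hiTS 0 (π-η)) (hiTS (π-η) π)]
      have n1 : 0 ≤ ∫ θ in (0:ℝ)..η, t θ ^ 2 * Real.sin θ := by
        apply intervalIntegral.integral_nonneg hη0.le
        intro u hu
        exact mul_nonneg (sq_nonneg _) (Real.sin_nonneg_of_nonneg_of_le_pi hu.1 (by linarith [hu.2]))
      have n3 : 0 ≤ ∫ θ in (π-η)..π, t θ ^ 2 * Real.sin θ := by
        apply intervalIntegral.integral_nonneg (by linarith)
        intro u hu
        exact mul_nonneg (sq_nonneg _) (Real.sin_nonneg_of_nonneg_of_le_pi (by linarith [hu.1]) hu.2)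
      linarith [e]
    rw [intervalIntegral.integral_const_mul] at step1
    calc (∫ θ in η..(π-η), t θ ^ 2) ≤ 6*p * ∫ θ in η..(π-η), t θ ^ 2 * Real.sin θ := step1
    _ ≤ 6*p * ∫ θ in (0:ℝ)..π, t θ ^ 2 * Real.sin θ := by
        apply mul_le_mul_of_nonneg_left step2 (by positivity)
  -- combine
  have hcomb : A ≤ 4*η*M + 12*p*B := by
    rw [hsym, hsplit]
    rw [hsubst] at bound2
    linarith
  have hp0 : (0:ℝ) < 3*p := by positivity
  have hAB : A ≤ 24*p*B := by
    have hc6 : 6*(p:ℝ)*A ≤ 6*p*(4*η*M + 12*p*B) :=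
      mul_le_mul_of_nonneg_left hcomb (by positivity)
    have e6 : 6*(p:ℝ)*(4*η*M + 12*p*B) = 2*π*M + 72*p^2*B := by
      rw [hηdef]; field_simp; ring
    rw [e6] at hc6
    have hπM : 2*π*M = (2*p+1)*A := by linarith [hMA]
    rw [hπM] at hc6
    have h3p : 3*(p:ℝ)*A ≤ 72*p^2*B := by
      nlinarith [hc6, mul_nonneg (sub_nonneg.mpr hp') hA]
    have h9 : 3*(p:ℝ)*A ≤ 3*p*(24*p*B) := by nlinarith [h3p]
    exact le_of_mul_le_mul_left h9 hp0
  -- final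
  have hx1 : q x₀ ^ 2 ≤ M := by
    have h := hpw (Real.arccos x₀)
    have h' : q (Real.cos (Real.arccos x₀)) ^ 2 ≤ M := h
    rwa [Real.cos_arccos hx₀.1 hx₀.2] at h'
  have h5 : (2*(p:ℝ)+1)*A ≤ (2*p+1)*(24*p*B) := mul_le_mul_of_nonneg_left hAB (by positivity)
  have h6 : (2*(p:ℝ)+1)*(24*p*B) ≤ 72*p^2*B := by
    nlinarith [mul_nonneg (mul_nonneg (by positivity : (0:ℝ) ≤ (p:ℝ)) (sub_nonneg.mpr hp')) hB]
  have h7 : M * 6 ≤ M * (2*π) := by nlinarith [hM0, hπ]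
  have h8 : M ≤ 12*p^2*B := by linarith [hMA]
  linarith [hx1, h8]

lemma key1d (p : ℕ) (hp : 1 ≤ p) (a : ℕ → ℝ) (u₀ : ℝ) (hu₀ : u₀ ∈ Icc (0:ℝ) 1) :
    (∑ j ∈ range (p+1), a j * u₀ ^ j)^2
      ≤ 24 * p^2 * ∫ u in (0:ℝ)..1, (∑ j ∈ range (p+1), a j * u ^ j)^2 := by
  set aR : ℕ → ℝ := fun m => ∑ j ∈ range (p+1), if m ≤ j then a j * (j.choose m) / 2^j else 0
    with hadef
  have hrew : ∀ x : ℝ, (∑ m ∈ range (p+1), aR m * x ^ m)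
      = ∑ j ∈ range (p+1), a j * ((x+1)/2) ^ j := by
    intro x
    calc ∑ m ∈ range (p+1), aR m * x ^ m
        = ∑ m ∈ range (p+1), ∑ j ∈ range (p+1),
            (if m ≤ j then a j * (j.choose m) / 2^j else 0) * x ^ m := by
          refine Finset.sum_congr rfl fun m _ => ?_
          rw [hadef, Finset.sum_mul]
      _ = ∑ j ∈ range (p+1), ∑ m ∈ range (p+1),
            (if m ≤ j then a j * (j.choose m) / 2^j else 0) * x ^ m := Finset.sum_comm
      _ = ∑ j ∈ range (p+1), a j * ((x+1)/2) ^ j := by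
          refine Finset.sum_congr rfl fun j hj => ?_
          have hj' : j ≤ p := by simpa [Nat.lt_succ_iff] using hj
          have step1 : ∀ m ∈ range (p+1),
              (if m ≤ j then a j * (j.choose m) / 2^j else 0) * x ^ m
              = if m ≤ j then a j * (j.choose m) / 2^j * x ^ m else 0 := by
            intro m _
            by_cases h : m ≤ j <;> simp [h]
          rw [Finset.sum_congr rfl step1, ← Finset.sum_filter]
          have hfil : (range (p+1)).filter (· ≤ j) = range (j+1) := by
            ext m
            simp only [Finset.mem_filter, Finset.mem_range]
            omega
          rw [hfil, div_pow, add_pow]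
          simp only [one_pow, mul_one]
          rw [Finset.sum_div, Finset.mul_sum]
          refine Finset.sum_congr rfl fun m _ => ?_
          ring
  have h1 := pt_half p hp aR (2*u₀-1) ⟨by linarith [hu₀.1], by linarith [hu₀.2]⟩
  have e1 : ∑ m ∈ range (p+1), aR m * (2*u₀-1)^m = ∑ j ∈ range (p+1), a j * u₀^j := by
    rw [hrew]
    refine Finset.sum_congr rfl fun j _ => ?_
    norm_num
  have e2 : (∫ x in (-1:ℝ)..1, (∑ m ∈ range (p+1), aR m * x ^ m)^2)
      = 2 * ∫ u in (0:ℝ)..1, (∑ j ∈ range (p+1), a j * u ^ j)^2 := by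
    have hg : Continuous fun u : ℝ => (∑ j ∈ range (p+1), a j * u ^ j)^2 :=
      (contq p a).pow 2
    rw [intervalIntegral.integral_congr
      (g := fun x => (fun u : ℝ => (∑ j ∈ range (p+1), a j * u ^ j)^2) ((x+1)/2))
      (fun x _ => by simp only; rw [hrew x])]
    exact rescale_int _ hg
  rw [e1, e2] at h1
  linarith [h1]

lemma myCS {E : Type*} [MeasurableSpace E] (μ : Measure E) (f g : E → ℝ)
    (hfg : Integrable (fun x => |f x * g x|) μ)
    (hf : Integrable (fun x => f x ^ 2) μ) (hg : Integrable (fun x => g x ^ 2) μ) :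
    ∫ x, |f x * g x| ∂μ ≤ Real.sqrt (∫ x, f x ^2 ∂μ) * Real.sqrt (∫ x, g x ^2 ∂μ) := by
  set A := ∫ x, f x ^2 ∂μ with hAdef
  set B := ∫ x, g x ^2 ∂μ with hBdef
  have hA : 0 ≤ A := integral_nonneg fun x => sq_nonneg _
  have hB : 0 ≤ B := integral_nonneg fun x => sq_nonneg _
  have hzero : ∀ (h : E → ℝ), Integrable (fun x => h x ^ 2) μ → (∫ x, h x ^2 ∂μ) = 0 →
      (fun x => |f x * g x|) =ᵐ[μ] 0 ∨ True → True := fun _ _ _ _ => trivial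
  rcases eq_or_lt_of_le hA with hA0 | hA0
  · have hf0 : (fun x => f x ^ 2) =ᵐ[μ] 0 :=
      (integral_eq_zero_iff_of_nonneg (fun x => sq_nonneg (f x)) hf).mp hA0.symm
    have hz : (fun x => |f x * g x|) =ᵐ[μ] 0 := by
      filter_upwards [hf0] with x hx
      have : f x = 0 := by
        have hx' : f x ^ 2 = 0 := hx
        exact pow_eq_zero_iff two_ne_zero |>.mp hx'
      simp [this]
    rw [integral_congr_ae hz]
    simp
    positivity
  rcases eq_or_lt_of_le hB with hB0 | hB0
  · have hg0 : (fun x => g x ^ 2) =ᵐ[μ] 0 :=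
      (integral_eq_zero_iff_of_nonneg (fun x => sq_nonneg (g x)) hg).mp hB0.symm
    have hz : (fun x => |f x * g x|) =ᵐ[μ] 0 := by
      filter_upwards [hg0] with x hx
      have : g x = 0 := by
        have hx' : g x ^ 2 = 0 := hx
        exact pow_eq_zero_iff two_ne_zero |>.mp hx'
      simp [this]
    rw [integral_congr_ae hz]
    simp
    positivity
  · set t := Real.sqrt B / Real.sqrt A with htdef
    have hsA : 0 < Real.sqrt A := Real.sqrt_pos.mpr hA0
    have hsB : 0 < Real.sqrt B := Real.sqrt_pos.mpr hB0
    have ht : 0 < t := div_pos hsB hsA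
    have hpt : ∀ x, |f x * g x| ≤ (t * f x^2 + g x^2 / t)/2 := by
      intro x
      have h2t : (0:ℝ) < 2*t := by linarith
      have key : |f x * g x| * (2*t) ≤ t^2 * f x^2 + g x^2 := by
        rcases abs_cases (f x * g x) with ⟨h,_⟩|⟨h,_⟩ <;>
          nlinarith [sq_nonneg (t*f x - g x), sq_nonneg (t*f x + g x)]
      calc |f x*g x| = |f x*g x| * (2*t) / (2*t) := by field_simp
      _ ≤ (t^2*f x^2 + g x^2)/(2*t) := (div_le_div_iff_of_pos_right h2t).mpr key
      _ = (t*f x^2 + g x^2/t)/2 := by field_simp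
    have hint : Integrable (fun x => (t * f x^2 + g x^2/t)/2) μ :=
      ((hf.const_mul t).add (hg.div_const t)).div_const 2
    have hle := integral_mono hfg hint hpt
    rw [MeasureTheory.integral_div, integral_add (hf.const_mul t) (hg.div_const t),
      MeasureTheory.integral_const_mul, MeasureTheory.integral_div] at hle
    have heq : (t*A + B/t)/2 = Real.sqrt A * Real.sqrt B := by
      have h1 : t*A = Real.sqrt B * Real.sqrt A := by
        rw [htdef, div_mul_eq_mul_div, mul_div_assoc, Real.div_sqrt]
      have h2 : B/t = Real.sqrt A * Real.sqrt B := by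
        rw [htdef, div_div_eq_mul_div, mul_comm, mul_div_assoc, Real.div_sqrt]
      rw [h1, h2]
      ring
    rw [← hAdef, ← hBdef] at hle
    linarith [hle, heq.symm.le]

lemma int01_sq (p : ℕ) (a : ℕ → ℝ) :
    ∫ u in (0:ℝ)..1, (∑ j ∈ range (p+1), a j * u ^ j)^2
      = ∑ i ∈ range (p+1), ∑ k ∈ range (p+1), a i * a k / (i+k+1) := by
  have e : ∀ u : ℝ, (∑ j ∈ range (p+1), a j * u ^ j)^2
      = ∑ i ∈ range (p+1), ∑ k ∈ range (p+1), (a i * a k) * u^(i+k) := by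
    intro u
    rw [sq, Finset.sum_mul_sum]
    refine Finset.sum_congr rfl fun i _ => Finset.sum_congr rfl fun k _ => ?_
    rw [pow_add]
    ring
  rw [intervalIntegral.integral_congr (g := fun u => ∑ i ∈ range (p+1), ∑ k ∈ range (p+1),
      (a i * a k) * u^(i+k)) (fun u _ => e u)]
  rw [intervalIntegral.integral_finset_sum (fun i _ => (continuous_finset_sum _ fun k _ =>
      by fun_prop).intervalIntegrable _ _)]
  refine Finset.sum_congr rfl fun i _ => ?_
  rw [intervalIntegral.integral_finset_sum (fun k _ => by
    apply Continuous.intervalIntegrable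
    fun_prop)]
  refine Finset.sum_congr rfl fun k _ => ?_
  rw [intervalIntegral.integral_const_mul, integral_pow]
  push_cast
  ring

lemma poly2_nat (p : ℕ) (g : ℝ → ℝ → ℝ) (hg : Poly2 p g) :
    ∃ d : ℕ → ℕ → ℝ, ∀ x y : ℝ,
      g x y = ∑ i ∈ range (p+1), ∑ j ∈ range (p+1), d i j * x ^ i * y ^ j := by
  obtain ⟨c, hc⟩ := hg
  refine ⟨fun i j => if h : i < p+1 ∧ j < p+1 then c ⟨i, h.1⟩ ⟨j, h.2⟩ else 0, fun x y => ?_⟩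
  rw [hc x y]
  calc ∑ i : Fin (p+1), ∑ j : Fin (p+1), c i j * x^(i:ℕ) * y^(j:ℕ)
      = ∑ i : Fin (p+1), ∑ j ∈ range (p+1),
          (fun i' j' : ℕ => if h : i' < p+1 ∧ j' < p+1 then c ⟨i', h.1⟩ ⟨j', h.2⟩ else 0) i j
            * x^(i:ℕ) * y^j := by
        refine Finset.sum_congr rfl fun i _ => ?_
        rw [← Fin.sum_univ_eq_sum_range (fun j => (fun i' j' : ℕ =>
          if h : i' < p+1 ∧ j' < p+1 then c ⟨i', h.1⟩ ⟨j', h.2⟩ else 0) i j * x^(i:ℕ) * y^j)]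
        refine Finset.sum_congr rfl fun j _ => ?_
        simp [i.isLt, j.isLt]
    _ = ∑ i ∈ range (p+1), ∑ j ∈ range (p+1),
          (fun i' j' : ℕ => if h : i' < p+1 ∧ j' < p+1 then c ⟨i', h.1⟩ ⟨j', h.2⟩ else 0) i j
            * x^i * y^j := by
        rw [← Fin.sum_univ_eq_sum_range (fun i => ∑ j ∈ range (p+1), (fun i' j' : ℕ =>
          if h : i' < p+1 ∧ j' < p+1 then c ⟨i', h.1⟩ ⟨j', h.2⟩ else 0) i j * x^i * y^j)]

lemma strip_bound (p : ℕ) (hp : 1 ≤ p) (δ : ℝ) (hδ : δ ∈ Ioc (0:ℝ) 1)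
    (g : ℝ → ℝ → ℝ) (d : ℕ → ℕ → ℝ)
    (hgd : ∀ x y : ℝ, g x y = ∑ i ∈ range (p+1), ∑ j ∈ range (p+1), d i j * x ^ i * y ^ j) :
    (∫ z in (Ioo (0:ℝ) δ ×ˢ Ioo (0:ℝ) 1), (g z.1 z.2)^2)
      ≤ 24 * p^2 * δ * ∫ z in (Icc (0:ℝ) 1 ×ˢ Icc (0:ℝ) 1), (g z.1 z.2)^2 := by
  have hδ0 : 0 < δ := hδ.1
  have hδ1 : δ ≤ 1 := hδ.2
  set F : ℝ×ℝ → ℝ := fun z => (g z.1 z.2)^2 with hFdef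
  have hgc : Continuous fun z : ℝ×ℝ => g z.1 z.2 := by
    have e : (fun z : ℝ×ℝ => g z.1 z.2) = fun z : ℝ×ℝ =>
        ∑ i ∈ range (p+1), ∑ j ∈ range (p+1), d i j * z.1^i * z.2^j :=
      funext fun z => hgd z.1 z.2
    rw [e]
    exact continuous_finset_sum _ fun i _ => continuous_finset_sum _ fun j _ => by fun_prop
  have hFc : Continuous F := hgc.pow 2
  set ay : ℝ → ℕ → ℝ := fun y i => ∑ j ∈ range (p+1), d i j * y ^ j with haydef
  have hfib : ∀ x y : ℝ, g x y = ∑ i ∈ range (p+1), ay y i * x ^ i := by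
    intro x y
    rw [hgd]
    refine Finset.sum_congr rfl fun i _ => ?_
    rw [haydef]
    simp only
    rw [Finset.sum_mul]
    refine Finset.sum_congr rfl fun j _ => ?_
    ring
  set H : ℝ → ℝ := fun y => ∫ u in (0:ℝ)..1, (g u y)^2 with hHdef
  have hHc : Continuous H := by
    have e : H = fun y => ∑ i ∈ range (p+1), ∑ k ∈ range (p+1), ay y i * ay y k / (i+k+1) := by
      funext y
      rw [hHdef]
      simp only
      rw [intervalIntegral.integral_congr (g := fun u => (∑ i ∈ range (p+1), ay y i * u^i)^2)
        (fun u _ => by rw [hfib u y])]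
      exact int01_sq p (ay y)
    rw [e]
    refine continuous_finset_sum _ fun i _ => continuous_finset_sum _ fun k _ => ?_
    apply Continuous.div_const
    exact Continuous.mul (continuous_finset_sum _ fun j _ => by fun_prop)
      (continuous_finset_sum _ fun j _ => by fun_prop)
  have hkey : ∀ x ∈ Icc (0:ℝ) 1, ∀ y : ℝ, F (x, y) ≤ 24*p^2 * H y := by
    intro x hx y
    have h1 := key1d p hp (ay y) x hx
    have e1 : F (x, y) = (∑ i ∈ range (p+1), ay y i * x ^ i)^2 := by
      rw [hFdef]; simp only; rw [hfib x y]
    rw [e1, hHdef]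
    refine h1.trans (le_of_eq ?_)
    congr 1
    exact intervalIntegral.integral_congr (fun u _ => by rw [hfib u y])
  have hIcc : IntegrableOn F (Icc (0:ℝ) 1 ×ˢ Icc (0:ℝ) 1) :=
    (hFc.continuousOn).integrableOn_compact (isCompact_Icc.prod isCompact_Icc)
  have hsub1 : (Ioo (0:ℝ) δ ×ˢ Ioo (0:ℝ) 1) ⊆ (Icc (0:ℝ) 1 ×ˢ Icc (0:ℝ) 1) :=
    Set.prod_mono (fun x hx => ⟨hx.1.le, hx.2.le.trans hδ1⟩) Ioo_subset_Icc_self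
  have hstrip : IntegrableOn F (Ioo (0:ℝ) δ ×ˢ Ioo (0:ℝ) 1) := hIcc.mono_set hsub1
  have hsq : IntegrableOn F (Ioo (0:ℝ) 1 ×ˢ Ioo (0:ℝ) 1) :=
    hIcc.mono_set (Set.prod_mono Ioo_subset_Icc_self Ioo_subset_Icc_self)
  have prodInt : ∀ (s t : Set ℝ), IntegrableOn F (s ×ˢ t) volume →
      Integrable F ((volume.restrict s).prod (volume.restrict t)) := by
    intro s t h
    rw [Measure.prod_restrict, ← Measure.volume_eq_prod]
    exact h
  have hprod_eq : ∀ (s t : Set ℝ), IntegrableOn F (s ×ˢ t) volume →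
      (∫ z in s ×ˢ t, F z) = ∫ x in s, ∫ y in t, F (x, y) := by
    intro s t h
    rw [show (volume : Measure (ℝ×ℝ)) = (volume : Measure ℝ).prod volume from
      Measure.volume_eq_prod ℝ ℝ]
    exact setIntegral_prod F (by rwa [← Measure.volume_eq_prod])
  set K : ℝ := 24*p^2 * ∫ y in Ioo (0:ℝ) 1, H y with hKdef
  have step1 : (∫ z in Ioo (0:ℝ) δ ×ˢ Ioo (0:ℝ) 1, F z)
      = ∫ x in Ioo (0:ℝ) δ, ∫ y in Ioo (0:ℝ) 1, F (x, y) := hprod_eq _ _ hstrip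
  have hH_int : IntegrableOn H (Ioo (0:ℝ) 1) volume :=
    (hHc.integrableOn_Icc).mono_set Ioo_subset_Icc_self
  have inner_le : ∀ x ∈ Ioo (0:ℝ) δ, (∫ y in Ioo (0:ℝ) 1, F (x, y)) ≤ K := by
    intro x hx
    have hx' : x ∈ Icc (0:ℝ) 1 := ⟨hx.1.le, hx.2.le.trans hδ1⟩
    have hFy : IntegrableOn (fun y => F (x, y)) (Ioo (0:ℝ) 1) volume :=
      ((hFc.comp (Continuous.prodMk_right x)).integrableOn_Icc).mono_set Ioo_subset_Icc_self
    have h1 : (∫ y in Ioo (0:ℝ) 1, F (x, y)) ≤ ∫ y in Ioo (0:ℝ) 1, 24*p^2 * H y :=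
      setIntegral_mono_on hFy (hH_int.const_mul _) measurableSet_Ioo
        (fun y _ => hkey x hx' y)
    rw [MeasureTheory.integral_const_mul] at h1
    exact h1
  have hinner_int : Integrable (fun x => ∫ y in Ioo (0:ℝ) 1, F (x, y))
      (volume.restrict (Ioo (0:ℝ) δ)) := (prodInt _ _ hstrip).integral_prod_left
  have step2 : (∫ x in Ioo (0:ℝ) δ, ∫ y in Ioo (0:ℝ) 1, F (x, y))
      ≤ ∫ _x in Ioo (0:ℝ) δ, K :=
    setIntegral_mono_on hinner_int (integrableOn_const (ne_of_lt (by
      rw [Real.volume_Ioo]; exact ENNReal.ofReal_lt_top))) measurableSet_Ioo inner_le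
  have step3 : (∫ _x in Ioo (0:ℝ) δ, K) = δ * K := by
    rw [setIntegral_const, measureReal_def, Real.volume_Ioo, smul_eq_mul, sub_zero,
      ENNReal.toReal_ofReal hδ0.le]
  have step4 : (∫ y in Ioo (0:ℝ) 1, H y) = ∫ z in Ioo (0:ℝ) 1 ×ˢ Ioo (0:ℝ) 1, F z := by
    have e1 : ∀ y : ℝ, H y = ∫ x in Ioo (0:ℝ) 1, F (x, y) := by
      intro y
      rw [hHdef]
      simp only
      rw [intervalIntegral.integral_of_le zero_le_one, integral_Ioc_eq_integral_Ioo]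
    rw [integral_congr_ae (Filter.Eventually.of_forall fun y => e1 y)]
    rw [← integral_integral_swap (f := fun x y => F (x, y)) (by
      have := prodInt _ _ hsq
      exact this.congr (Filter.Eventually.of_forall fun z => rfl))]
    exact (hprod_eq _ _ hsq).symm
  have step5 : (∫ z in Ioo (0:ℝ) 1 ×ˢ Ioo (0:ℝ) 1, F z)
      ≤ ∫ z in Icc (0:ℝ) 1 ×ˢ Icc (0:ℝ) 1, F z :=
    setIntegral_mono_set hIcc (Filter.Eventually.of_forall fun z => sq_nonneg _)
      (HasSubset.Subset.eventuallyLE (Set.prod_mono Ioo_subset_Icc_self Ioo_subset_Icc_self))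
  calc (∫ z in Ioo (0:ℝ) δ ×ˢ Ioo (0:ℝ) 1, F z) ≤ δ * K := by
        rw [step1]; exact step2.trans (le_of_eq step3)
  _ = 24*p^2*δ * ∫ y in Ioo (0:ℝ) 1, H y := by rw [hKdef]; ring
  _ = 24*p^2*δ * ∫ z in Ioo (0:ℝ) 1 ×ˢ Ioo (0:ℝ) 1, F z := by rw [step4]
  _ ≤ 24*p^2*δ * ∫ z in Icc (0:ℝ) 1 ×ˢ Icc (0:ℝ) 1, F z := by
      apply mul_le_mul_of_nonneg_left step5 (by positivity)

end Aux

/-- a 2D strengthened Cauchy-Schwarz inequality for polynomials. -/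
theorem statement15 :
    ∃ C : ℝ, 0 < C ∧
      ∀ p : ℕ, 1 ≤ p →
      ∀ δ : ℝ, δ ∈ Ioc (0:ℝ) 1 →
      ∀ π₁ π₂ : ℝ → ℝ → ℝ, Poly2 p π₁ → Poly2 p π₂ →
        (∫ z in (Ioo (0:ℝ) δ ×ˢ Ioo (0:ℝ) 1), |π₁ z.1 z.2 * π₂ z.1 z.2|)
          ≤ C * p * Real.sqrt δ
              * L2two π₁ (Icc (0:ℝ) 1 ×ˢ Icc (0:ℝ) 1)
              * L2two π₂ (Icc (0:ℝ) δ ×ˢ Icc (0:ℝ) 1) := by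
  refine ⟨5, by norm_num, fun p hp δ hδ π₁ π₂ h₁ h₂ => ?_⟩
  obtain ⟨d₁, hd₁⟩ := poly2_nat p π₁ h₁
  obtain ⟨d₂, hd₂⟩ := poly2_nat p π₂ h₂
  have hδ0 : 0 < δ := hδ.1
  have hδ1 : δ ≤ 1 := hδ.2
  set f : ℝ×ℝ → ℝ := fun z => π₁ z.1 z.2 with hfdef
  set g : ℝ×ℝ → ℝ := fun z => π₂ z.1 z.2 with hgdef
  have hfc : Continuous f := by
    have e : f = fun z : ℝ×ℝ => ∑ i ∈ range (p+1), ∑ j ∈ range (p+1), d₁ i j * z.1^i * z.2^j :=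
      funext fun z => hd₁ z.1 z.2
    rw [e]
    exact continuous_finset_sum _ fun i _ => continuous_finset_sum _ fun j _ => by fun_prop
  have hgc : Continuous g := by
    have e : g = fun z : ℝ×ℝ => ∑ i ∈ range (p+1), ∑ j ∈ range (p+1), d₂ i j * z.1^i * z.2^j :=
      funext fun z => hd₂ z.1 z.2
    rw [e]
    exact continuous_finset_sum _ fun i _ => continuous_finset_sum _ fun j _ => by fun_prop
  set strip := Ioo (0:ℝ) δ ×ˢ Ioo (0:ℝ) 1 with hstripdef
  set sq1 := Icc (0:ℝ) 1 ×ˢ Icc (0:ℝ) 1 with hsq1def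
  set rect := Icc (0:ℝ) δ ×ˢ Icc (0:ℝ) 1 with hrectdef
  have hsub1 : strip ⊆ sq1 :=
    Set.prod_mono (fun x hx => ⟨hx.1.le, hx.2.le.trans hδ1⟩) Ioo_subset_Icc_self
  have hsub2 : strip ⊆ rect := Set.prod_mono Ioo_subset_Icc_self Ioo_subset_Icc_self
  -- integrability
  have hfg_int : IntegrableOn (fun z => |f z * g z|) strip volume := by
    apply IntegrableOn.mono_set (t := sq1) ?_ hsub1
    exact (((hfc.mul hgc).abs).continuousOn).integrableOn_compact (isCompact_Icc.prod isCompact_Icc)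
  have hf2_int : IntegrableOn (fun z => f z ^ 2) strip volume := by
    apply IntegrableOn.mono_set (t := sq1) ?_ hsub1
    exact ((hfc.pow 2).continuousOn).integrableOn_compact (isCompact_Icc.prod isCompact_Icc)
  have hg2_int : IntegrableOn (fun z => g z ^ 2) strip volume := by
    apply IntegrableOn.mono_set (t := sq1) ?_ hsub1
    exact ((hgc.pow 2).continuousOn).integrableOn_compact (isCompact_Icc.prod isCompact_Icc)
  have hCS := myCS (volume.restrict strip) f g hfg_int hf2_int hg2_int
  -- strip bounds
  have hsb1 : (∫ z in strip, f z ^ 2) ≤ 24 * p^2 * δ * ∫ z in sq1, f z ^ 2 :=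
    strip_bound p hp δ hδ π₁ d₁ hd₁
  have hsb2 : (∫ z in strip, g z ^ 2) ≤ ∫ z in rect, g z ^ 2 := by
    apply setIntegral_mono_set
    · exact ((hgc.pow 2).continuousOn).integrableOn_compact
        ((isCompact_Icc).prod isCompact_Icc)
    · exact Filter.Eventually.of_forall fun z => sq_nonneg _
    · exact HasSubset.Subset.eventuallyLE hsub2
  have hsq1_nonneg : 0 ≤ ∫ z in sq1, f z ^ 2 :=
    setIntegral_nonneg (measurableSet_Icc.prod measurableSet_Icc) fun z _ => sq_nonneg _
  -- sqrt bounds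
  have hs1 : Real.sqrt (∫ z in strip, f z ^ 2)
      ≤ 5 * p * Real.sqrt δ * L2two π₁ sq1 := by
    have h1 : Real.sqrt (∫ z in strip, f z ^ 2)
        ≤ Real.sqrt (24 * p^2 * δ * ∫ z in sq1, f z ^ 2) := Real.sqrt_le_sqrt hsb1
    refine h1.trans ?_
    rw [L2two, show (24 * (p:ℝ)^2 * δ * ∫ z in sq1, f z ^ 2)
        = (24 * p^2 * δ) * ∫ z in sq1, f z ^ 2 from by ring,
      Real.sqrt_mul (by positivity)]
    apply mul_le_mul_of_nonneg_right ?_ (Real.sqrt_nonneg _)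
    rw [show (24 * (p:ℝ)^2 * δ) = (24 * p^2) * δ from by ring, Real.sqrt_mul (by positivity)]
    apply mul_le_mul_of_nonneg_right ?_ (Real.sqrt_nonneg _)
    have : (24 * (p:ℝ)^2) ≤ (5*p)^2 := by nlinarith [sq_nonneg (p:ℝ)]
    calc Real.sqrt (24 * (p:ℝ)^2) ≤ Real.sqrt ((5*p)^2) := Real.sqrt_le_sqrt this
    _ = 5 * p := Real.sqrt_sq (by positivity)
  have hs2 : Real.sqrt (∫ z in strip, g z ^ 2) ≤ L2two π₂ rect := by
    rw [L2two]
    exact Real.sqrt_le_sqrt hsb2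
  have hfinal : (∫ z in strip, |f z * g z|)
      ≤ (5 * p * Real.sqrt δ * L2two π₁ sq1) * L2two π₂ rect := by
    refine hCS.trans ?_
    have hL1 : 0 ≤ L2two π₁ sq1 := Real.sqrt_nonneg _
    exact mul_le_mul hs1 hs2 (Real.sqrt_nonneg _) (mul_nonneg (by positivity) hL1)
  calc (∫ z in strip, |π₁ z.1 z.2 * π₂ z.1 z.2|) = ∫ z in strip, |f z * g z| := rfl
  _ ≤ (5 * p * Real.sqrt δ * L2two π₁ sq1) * L2two π₂ rect := hfinal
  _ = 5 * p * Real.sqrt δ * L2two π₁ sq1 * L2two π₂ rect := by ring
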